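/- Let V : ℝ^n → ℝ be C¹ with V positive definite, and let b : ℝ^n → ℝ^{n×m} satisfy rank b(x) = n for all x. Define u_d(x) := −(λ/|∇V(x)|) b(x)⁺ ∇V(x) where b⁺ := bᵀ(b bᵀ)⁻¹. Then for any disturbance vector d with |d| < λ, at any point x with ∇V(x) ≠ 0 one has ∇V(x)ᵀ(b(x) u_d(x) + d) ≤ (|d| − λ)|∇V(x)| < 0. -/

import Mathlib

open Matrix

noncomputable def euclNorm {n : ℕ} (v : Fin n → ℝ) : ℝ := Real.sqrt (v ⬝ᵥ v)

lemma euclNorm_eq_norm {n : ℕ} (v : Fin n → ℝ) :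
    euclNorm v = ‖(EuclideanSpace.equiv (Fin n) ℝ).symm v‖ := by
  rw [EuclideanSpace.norm_eq]
  simp [euclNorm, dotProduct, sq]

lemma euclNorm_pos {n : ℕ} {v : Fin n → ℝ} (hv : v ≠ 0) : 0 < euclNorm v := by
  rw [euclNorm_eq_norm]
  simpa using hv

lemma dot_le_euclNorm {n : ℕ} (v w : Fin n → ℝ) :
    v ⬝ᵥ w ≤ euclNorm v * euclNorm w := by
  have h := real_inner_le_norm ((EuclideanSpace.equiv (Fin n) ℝ).symm v)
    ((EuclideanSpace.equiv (Fin n) ℝ).symm w)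
  rw [euclNorm_eq_norm, euclNorm_eq_norm]
  refine le_trans (le_of_eq ?_) h
  simp [PiLp.inner_apply, dotProduct, mul_comm]

lemma sq_euclNorm {n : ℕ} (v : Fin n → ℝ) : euclNorm v * euclNorm v = v ⬝ᵥ v := by
  exact Real.mul_self_sqrt (Finset.sum_nonneg fun i _ => mul_self_nonneg _)

/-- Nonlinear Lyapunov redesign inequality: with
`u_d(x) = −(λ/|∇V(x)|) b(x)⁺ ∇V(x)`, for any `d` with `|d| < λ` and any `x`
with `∇V(x) ≠ 0`, `∇V(x)ᵀ(b(x)u_d(x) + d) ≤ (|d| − λ)|∇V(x)| < 0`. -/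
theorem stmt6 {n m : ℕ} (V : (Fin n → ℝ) → ℝ) (gradV : (Fin n → ℝ) → Fin n → ℝ)
    (hVdiff : Differentiable ℝ V)
    (hgrad : ∀ y h, fderiv ℝ V y h = gradV y ⬝ᵥ h)
    (hVpos : V 0 = 0 ∧ ∀ y : Fin n → ℝ, y ≠ 0 → 0 < V y)
    (b : (Fin n → ℝ) → Matrix (Fin n) (Fin m) ℝ)
    (hrank : ∀ y, (b y).rank = n)
    (lam : ℝ) (hlam : 0 < lam) :
    ∀ (x : Fin n → ℝ) (d : Fin n → ℝ), gradV x ≠ 0 → euclNorm d < lam →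
      letI ud : Fin m → ℝ := (-(lam / euclNorm (gradV x))) •
        (((b x)ᵀ * (b x * (b x)ᵀ)⁻¹) *ᵥ gradV x)
      gradV x ⬝ᵥ (b x *ᵥ ud + d) ≤ (euclNorm d - lam) * euclNorm (gradV x) ∧
        (euclNorm d - lam) * euclNorm (gradV x) < 0 := by
  intro x d hg hd
  set g := gradV x with hgdef
  set M := b x * (b x)ᵀ with hM
  have hgnorm : 0 < euclNorm g := euclNorm_pos hg
  -- M is invertible
  have hrankM : M.rank = n := by rw [hM, rank_self_mul_transpose]; exact hrank x
  have hMunit : IsUnit M := by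
    rw [← Matrix.mulVec_surjective_iff_isUnit]
    have : LinearMap.range M.mulVecLin = ⊤ := by
      apply Submodule.eq_top_of_finrank_eq
      rw [← Matrix.rank]
      simp [hrankM]
    exact LinearMap.range_eq_top.mp this
  have hMinv : M * M⁻¹ = 1 :=
    Matrix.mul_nonsing_inv M ((Matrix.isUnit_iff_isUnit_det M).mp hMunit)
  -- pseudoinverse identity : b x *ᵥ ((b x)ᵀ * M⁻¹ *ᵥ g) = g
  have hpinv : b x *ᵥ (((b x)ᵀ * M⁻¹) *ᵥ g) = g := by
    rw [Matrix.mulVec_mulVec, ← Matrix.mul_assoc, ← hM, hMinv, Matrix.one_mulVec]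
  have key : g ⬝ᵥ (b x *ᵥ ((-(lam / euclNorm g)) • (((b x)ᵀ * M⁻¹) *ᵥ g)))
      = -(lam * euclNorm g) := by
    rw [Matrix.mulVec_smul, dotProduct_smul, hpinv]
    rw [← sq_euclNorm g]
    field_simp
    rw [smul_eq_mul, neg_mul, div_mul_eq_mul_div, mul_div_assoc, sq, mul_self_div_self]
  have hsum : g ⬝ᵥ (b x *ᵥ ((-(lam / euclNorm g)) • (((b x)ᵀ * M⁻¹) *ᵥ g)) + d)
      ≤ (euclNorm d - lam) * euclNorm g := by
    rw [dotProduct_add, key]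
    have hcs : g ⬝ᵥ d ≤ euclNorm g * euclNorm d := dot_le_euclNorm g d
    nlinarith
  refine ⟨hsum, ?_⟩
  have : euclNorm d - lam < 0 := by linarith
  exact mul_neg_of_neg_of_pos this hgnorm
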